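/- (Lemma 2) Let u be a Schwartz eigenfunction of the PT-symmetric Schrödinger operator L with eigenvalue μ ∈ ℂ, i.e. u'' + V·u = -μ·u. Then (μ - conj(μ))·⟨u,u⟩_PT = 0; in particular, if μ is not real, then ⟨u, u⟩_PT = 0. -/

import Mathlib

open MeasureTheory Complex

/-- The PT-product `⟨f,g⟩_PT = ∫_ℝ conj(f(-x))·g(x) dx`. -/
noncomputable def PTprod (f g : ℝ → ℂ) : ℂ :=
  ∫ x : ℝ, (starRingEnd ℂ) (f (-x)) * g x

/-- (Lemma 2) For an eigenfunction `u` of the PT-symmetric Schrödinger operator with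
eigenvalue `μ`, one has `(μ - conj μ)·⟨u,u⟩_PT = 0`; in particular if `μ` is not real
then `⟨u,u⟩_PT = 0`. -/
theorem PT_selfproduct_complex_eigenvalue (V : ℝ → ℂ) (hVcont : Continuous V)
    (hVbdd : ∃ C : ℝ, ∀ x : ℝ, ‖V x‖ ≤ C)
    (hVPT : ∀ x : ℝ, (starRingEnd ℂ) (V (-x)) = V x)
    (μ : ℂ) (u : SchwartzMap ℝ ℂ)
    (hu : ∀ x : ℝ, deriv (deriv u) x + V x * u x = -μ * u x) :
    (μ - (starRingEnd ℂ) μ) * PTprod (fun x => u x) (fun x => u x) = 0 ∧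
      (μ.im ≠ 0 → PTprod (fun x => u x) (fun x => u x) = 0) := by
  set c := starRingEnd ℂ
  -- the derivative of u as a Schwartz map
  set u1 : SchwartzMap ℝ ℂ := SchwartzMap.derivCLM ℝ ℂ u with hu1
  have hu1' : ∀ x, u1 x = deriv u x := fun x => SchwartzMap.derivCLM_apply ℝ u x
  have hderiv_u : ∀ x : ℝ, HasDerivAt u (u1 x) x := by
    intro x
    rw [hu1']
    exact u.differentiableAt.hasDerivAt
  have hderiv_u1 : ∀ x : ℝ, HasDerivAt u1 (-μ * u x - V x * u x) x := by
    intro x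
    have h1 : HasDerivAt (deriv u) (deriv (deriv u) x) x := by
      have : Differentiable ℝ (deriv u) := by
        have := u1.differentiable
        have heq : (deriv u : ℝ → ℂ) = u1 := funext fun x => (hu1' x).symm
        rw [heq]; exact this
      exact (this x).hasDerivAt
    have h2 : deriv (deriv u) x = -μ * u x - V x * u x := by
      have := hu x; linear_combination this
    have h3 : HasDerivAt (deriv u) (-μ * u x - V x * u x) x := h2 ▸ h1
    have heq : (deriv u : ℝ → ℂ) = u1 := funext fun x => (hu1' x).symm
    rw [heq] at h3; exact h3
  -- auxiliary functions
  have hW : ∀ x : ℝ, HasDerivAt (fun x : ℝ => c (u (-x)) * u1 x + c (u1 (-x)) * u x)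
      ((c μ - μ) * (c (u (-x)) * u x)) x := by
    intro x
    have hneg : HasDerivAt (fun y : ℝ => -y) (-1 : ℝ) x := by
      exact hasDerivAt_neg' x
    have h1 : HasDerivAt (fun y : ℝ => u (-y)) ((-1 : ℝ) • u1 (-x)) x :=
      (hderiv_u (-x)).scomp x hneg
    have h2 : HasDerivAt (fun y : ℝ => c (u (-y))) (c ((-1 : ℝ) • u1 (-x))) x := h1.star
    have h3 : HasDerivAt (fun y : ℝ => u1 (-y))
        ((-1 : ℝ) • (-μ * u (-x) - V (-x) * u (-x))) x := (hderiv_u1 (-x)).scomp x hneg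
    have h4 : HasDerivAt (fun y : ℝ => c (u1 (-y)))
        (c ((-1 : ℝ) • (-μ * u (-x) - V (-x) * u (-x)))) x := h3.star
    have h5 := (h2.mul (hderiv_u1 x)).add (h4.mul (hderiv_u x))
    convert h5 using 1
    · rfl
    · rfl
    have hV := hVPT x
    simp only [real_smul, ofReal_neg, ofReal_one, map_mul, map_sub, map_neg, map_one, hV]
    ring
  -- integrability
  have hbound : ∀ f : SchwartzMap ℝ ℂ, ∃ C, ∀ x : ℝ, ‖c (f (-x))‖ ≤ C := by
    intro f
    exact ⟨(SchwartzMap.seminorm ℝ 0 0) f, fun x => by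
      rw [RCLike.norm_conj]; exact f.norm_le_seminorm ℝ (-x)⟩
  have hmeas : ∀ f : SchwartzMap ℝ ℂ, Continuous (fun x : ℝ => c (f (-x))) := by
    intro f
    exact continuous_conj.comp (f.continuous.comp continuous_neg)
  have hint : ∀ f g : SchwartzMap ℝ ℂ, Integrable (fun x : ℝ => c (f (-x)) * g x) := by
    intro f g
    exact (g.integrable (μ := volume)).bdd_mul (hmeas f).aestronglyMeasurable (ae_of_all _ (hbound f).choose_spec)
  have hintW : Integrable (fun x : ℝ => c (u (-x)) * u1 x + c (u1 (-x)) * u x) :=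
    (hint u u1).add (hint u1 u)
  have hintW' : Integrable (fun x : ℝ => (c μ - μ) * (c (u (-x)) * u x)) :=
    (hint u u).const_mul _
  -- FTC on the line
  have key : ∫ x : ℝ, (c μ - μ) * (c (u (-x)) * u x) = 0 :=
    integral_eq_zero_of_hasDerivAt_of_integrable hW hintW' hintW
  rw [integral_const_mul] at key
  have hmain : (μ - c μ) * PTprod (fun x => u x) (fun x => u x) = 0 := by
    have : PTprod (fun x => u x) (fun x => u x) = ∫ x : ℝ, c (u (-x)) * u x := rfl
    rw [this]
    rcases mul_eq_zero.mp key with h | h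
    · rw [show μ - c μ = -(c μ - μ) by ring, h]; ring
    · rw [h, mul_zero]
  refine ⟨hmain, fun him => ?_⟩
  have hne : μ - c μ ≠ 0 := by
    intro h
    apply him
    have h1 := congrArg Complex.im h
    rw [Complex.sub_im, show (c μ).im = -μ.im from Complex.conj_im μ, Complex.zero_im] at h1
    linarith
  exact (mul_eq_zero.mp hmain).resolve_left hne
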